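/- For j in a finite set F, let φ_j(x) = ½xᵀA_jx + b_jᵀx + ½c_j with A_j a real symmetric d×d matrix, b_j ∈ ℝ^d, c_j ∈ ℝ, and let Q_j be the symmetric (d+1)×(d+1) matrix Q_j = ½ [ [c_j, b_jᵀ], [b_j, A_j] ]. Fix j ∈ F with F \ {j} nonempty. Then sup_{x ∈ ℝ^d} min_{j' ≠ j} (φ_j(x) − φ_{j'}(x)) / (1 + |x|²) = sup { min_{j' ≠ j} yᵀ(Q_j − Q_{j'})y : y ∈ ℝ^{d+1}, ‖y‖ = 1, y₁ ≠ 0 }. -/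

import Mathlib

/-- The quadratic form `v ↦ vᵀ M v` associated to a matrix `M`. -/
noncomputable def quadForm {n : ℕ} (M : Matrix (Fin n) (Fin n) ℝ)
    (v : EuclideanSpace ℝ (Fin n)) : ℝ :=
  ∑ i, ∑ j, v i * M i j * v j

/-- The quadratic basis function `φ(x) = ½xᵀAx + bᵀx + ½c`. -/
noncomputable def phiQuad {d : ℕ} (A : Matrix (Fin d) (Fin d) ℝ) (b : Fin d → ℝ) (c : ℝ)
    (x : EuclideanSpace ℝ (Fin d)) : ℝ :=
  (1 / 2) * quadForm A x + ∑ i, b i * x i + (1 / 2) * c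

/-- The homogenized symmetric `(d+1)×(d+1)` matrix `Q = ½ [[c, bᵀ], [b, A]]`. -/
noncomputable def Qmat {d : ℕ} (A : Matrix (Fin d) (Fin d) ℝ) (b : Fin d → ℝ) (c : ℝ) :
    Matrix (Fin (d + 1)) (Fin (d + 1)) ℝ :=
  Matrix.of fun i i' =>
    (1 / 2) *
      (Fin.cases (motive := fun _ => ℝ)
        (Fin.cases (motive := fun _ => ℝ) c (fun k' => b k') i')
        (fun k => Fin.cases (motive := fun _ => ℝ) (b k) (fun k' => A k k') i') i)

/-- Package a plain function as a `EuclideanSpace` element. -/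
noncomputable def mkE {n : ℕ} (f : Fin n → ℝ) : EuclideanSpace ℝ (Fin n) :=
  (WithLp.equiv 2 (Fin n → ℝ)).symm f

@[simp] lemma mkE_apply {n : ℕ} (f : Fin n → ℝ) (i : Fin n) : mkE f i = f i := rfl

/-- The homogenizing vector `(t, x)`. -/
noncomputable def consE {d : ℕ} (t : ℝ) (x : EuclideanSpace ℝ (Fin d)) :
    EuclideanSpace ℝ (Fin (d + 1)) :=
  mkE (Fin.cons t fun i => x i)

@[simp] lemma consE_zero {d : ℕ} (t : ℝ) (x : EuclideanSpace ℝ (Fin d)) :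
    consE t x 0 = t := rfl

@[simp] lemma consE_succ {d : ℕ} (t : ℝ) (x : EuclideanSpace ℝ (Fin d)) (k : Fin d) :
    consE t x k.succ = x k := rfl

lemma quadForm_sub {n : ℕ} (M M' : Matrix (Fin n) (Fin n) ℝ) (v : EuclideanSpace ℝ (Fin n)) :
    quadForm (M - M') v = quadForm M v - quadForm M' v := by
  simp [quadForm, Matrix.sub_apply, mul_sub, sub_mul, Finset.sum_sub_distrib]

lemma quadForm_smul {n : ℕ} (M : Matrix (Fin n) (Fin n) ℝ) (t : ℝ) (v : EuclideanSpace ℝ (Fin n)) :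
    quadForm M (t • v) = t ^ 2 * quadForm M v := by
  simp only [quadForm, PiLp.smul_apply, smul_eq_mul, Finset.mul_sum]
  exact Finset.sum_congr rfl fun i _ => Finset.sum_congr rfl fun j _ => by ring

lemma quadForm_Qmat_consE {d : ℕ} (A : Matrix (Fin d) (Fin d) ℝ) (b : Fin d → ℝ) (c : ℝ)
    (t : ℝ) (x : EuclideanSpace ℝ (Fin d)) :
    quadForm (Qmat A b c) (consE t x) =
      (1/2) * c * t ^ 2 + t * ∑ i, b i * x i + (1/2) * quadForm A x := by
  simp only [quadForm, Qmat, Fin.sum_univ_succ, consE_zero, consE_succ,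
    Matrix.of_apply, Fin.cases_zero, Fin.cases_succ]
  have h1 : ∀ (u : Fin d → ℝ), ∑ k, t * (1/2 * b k) * u k = (1/2) * (t * ∑ k, b k * u k) := by
    intro u; rw [Finset.mul_sum, Finset.mul_sum]; exact Finset.sum_congr rfl fun _ _ => by ring
  have h3 : ∀ (u : Fin d → ℝ), (∑ k, (u k * ((1/2) * b k) * t + ∑ k', u k * (1/2 * A k k') * u k'))
      = (1/2) * (t * ∑ k, b k * u k) + (1/2) * ∑ k, ∑ k', u k * A k k' * u k' := by
    intro u
    rw [Finset.sum_add_distrib, Finset.mul_sum, Finset.mul_sum, Finset.mul_sum]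
    congr 1
    · exact Finset.sum_congr rfl fun _ _ => by ring
    · exact Finset.sum_congr rfl fun _ _ => by
        rw [Finset.mul_sum]; exact Finset.sum_congr rfl fun _ _ => by ring
  rw [h1, h3]
  ring

lemma quadForm_consE_phi {d : ℕ} (A : Matrix (Fin d) (Fin d) ℝ) (b : Fin d → ℝ) (c : ℝ)
    (x : EuclideanSpace ℝ (Fin d)) :
    quadForm (Qmat A b c) (consE 1 x) = phiQuad A b c x := by
  rw [quadForm_Qmat_consE, phiQuad]; ring

lemma norm_sq_eq {n : ℕ} (y : EuclideanSpace ℝ (Fin n)) : ‖y‖ ^ 2 = ∑ i, y i ^ 2 := by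
  rw [EuclideanSpace.norm_eq, Real.sq_sqrt (by positivity)]
  simp [sq_abs]

lemma norm_consE_sq {d : ℕ} (x : EuclideanSpace ℝ (Fin d)) :
    ‖consE 1 x‖ ^ 2 = 1 + ‖x‖ ^ 2 := by
  rw [norm_sq_eq, norm_sq_eq, Fin.sum_univ_succ]
  simp

/-- The normalized importance metric of the `j`-th quadratic basis function equals the
value of its homogenized quadratically constrained quadratic program. -/
theorem stmt14 {d : ℕ} {ι : Type*} [Fintype ι]
    (A : ι → Matrix (Fin d) (Fin d) ℝ) (hA : ∀ j, (A j).IsSymm)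
    (b : ι → Fin d → ℝ) (c : ι → ℝ) (j : ι) (hnt : ∃ j' : ι, j' ≠ j) :
    (⨆ x : EuclideanSpace ℝ (Fin d), ⨅ j' : {j' : ι // j' ≠ j},
        (phiQuad (A j) (b j) (c j) x - phiQuad (A j'.1) (b j'.1) (c j'.1) x) /
          (1 + ‖x‖ ^ 2)) =
    ⨆ y : {y : EuclideanSpace ℝ (Fin (d + 1)) // ‖y‖ = 1 ∧ y 0 ≠ 0},
      ⨅ j' : {j' : ι // j' ≠ j},
        quadForm (Qmat (A j) (b j) (c j) - Qmat (A j'.1) (b j'.1) (c j'.1)) y.1 := by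
  have hrange : Set.range (fun x : EuclideanSpace ℝ (Fin d) => ⨅ j' : {j' : ι // j' ≠ j},
        (phiQuad (A j) (b j) (c j) x - phiQuad (A j'.1) (b j'.1) (c j'.1) x) /
          (1 + ‖x‖ ^ 2)) =
      Set.range (fun y : {y : EuclideanSpace ℝ (Fin (d + 1)) // ‖y‖ = 1 ∧ y 0 ≠ 0} =>
        ⨅ j' : {j' : ι // j' ≠ j},
          quadForm (Qmat (A j) (b j) (c j) - Qmat (A j'.1) (b j'.1) (c j'.1)) y.1) := by
    apply Set.Subset.antisymm
    · rintro _ ⟨x, rfl⟩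
      have hs : (0:ℝ) < 1 + ‖x‖ ^ 2 := by positivity
      set t : ℝ := (Real.sqrt (1 + ‖x‖ ^ 2))⁻¹ with ht
      have htpos : 0 < t := by
        rw [ht]; exact inv_pos.mpr (Real.sqrt_pos.mpr hs)
      have hnorm : ‖t • consE 1 x‖ = 1 := by
        rw [norm_smul, Real.norm_eq_abs, abs_of_pos htpos, ht]
        have hc : ‖consE 1 x‖ = Real.sqrt (1 + ‖x‖ ^ 2) := by
          rw [← Real.sqrt_sq (norm_nonneg _), norm_consE_sq]
        rw [hc, inv_mul_cancel₀ (ne_of_gt (Real.sqrt_pos.mpr hs))]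
      have hy0 : (t • consE 1 x) 0 ≠ 0 := by
        have h0 : (t • consE 1 x) 0 = t := by
          simp
        rw [h0]; exact ne_of_gt htpos
      have ht2 : t ^ 2 = (1 + ‖x‖ ^ 2)⁻¹ := by
        rw [ht, ← Real.sqrt_inv, Real.sq_sqrt (by positivity)]
      refine ⟨⟨t • consE 1 x, hnorm, hy0⟩, ?_⟩
      refine iInf_congr fun j' => ?_
      show quadForm _ (t • consE 1 x) = _
      rw [quadForm_sub, quadForm_smul, quadForm_smul, quadForm_consE_phi,
        quadForm_consE_phi, ht2, div_eq_mul_inv]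
      ring
    · rintro _ ⟨⟨y, hy1, hy0⟩, rfl⟩
      set x : EuclideanSpace ℝ (Fin d) := mkE (fun i : Fin d => y i.succ / y 0) with hx
      have hyx : y = y 0 • consE 1 x := by
        apply (WithLp.equiv 2 (Fin (d+1) → ℝ)).injective
        funext i
        refine Fin.cases ?_ (fun k => ?_) i
        · simp
        · simp only [WithLp.equiv_apply, PiLp.smul_apply, WithLp.ofLp_smul, Pi.smul_apply, smul_eq_mul, consE_succ, hx,
            mkE_apply]
          field_simp
      have hsum : (y 0) ^ 2 + ∑ i : Fin d, y i.succ ^ 2 = 1 := by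
        have h := norm_sq_eq y
        rw [hy1, Fin.sum_univ_succ] at h
        simpa using h.symm
      have hxnorm : 1 + ‖x‖ ^ 2 = ((y 0) ^ 2)⁻¹ := by
        rw [norm_sq_eq]
        have hxi : ∀ i, x i ^ 2 = y i.succ ^ 2 / (y 0) ^ 2 := by
          intro i; rw [hx]; simp [div_pow]
        rw [Finset.sum_congr rfl fun i _ => hxi i, ← Finset.sum_div]
        have h2 : (y 0) ^ 2 ≠ 0 := pow_ne_zero 2 hy0
        field_simp
        linarith [hsum]
      have hq : ∀ j' : {j' : ι // j' ≠ j},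
          quadForm (Qmat (A j) (b j) (c j) - Qmat (A j'.1) (b j'.1) (c j'.1)) y =
            (y 0) ^ 2 *
              (phiQuad (A j) (b j) (c j) x - phiQuad (A j'.1) (b j'.1) (c j'.1) x) := by
        intro j'
        conv_lhs => rw [hyx]
        rw [quadForm_sub, quadForm_smul, quadForm_smul, quadForm_consE_phi, quadForm_consE_phi]
        ring
      refine ⟨x, ?_⟩
      refine iInf_congr fun j' => ?_
      rw [hxnorm, hq, div_inv_eq_mul]
      ring
  rw [← sSup_range, ← sSup_range, hrange]
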